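/- Let C be a category having coequalizers of reflexive pairs and let T be a monad on C whose underlying endofunctor preserves coequalizers of reflexive pairs. Then the forgetful functor U : Algebra(T) ⥤ C from the Eilenberg–Moore category of T-algebras creates coequalizers of reflexive pairs: given a reflexive pair of T-algebra maps whose image under U has a coequalizer in C, the coequalizer object carries a unique T-algebra structure making it the coequalizer in Algebra(T), and U preserves and reflects this coequalizer. -/

import Mathlib

open CategoryTheory CategoryTheory.Limits

universe v u

/-- Let `C` have coequalizers of reflexive pairs and let `T` be a monad on `C` whose
underlying endofunctor preserves coequalizers of reflexive pairs.  Then the forgetful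
functor `U : Algebra T ⥤ C` from the Eilenberg–Moore category of `T`-algebras creates
coequalizers of reflexive pairs. -/
theorem monad_forget_creates_reflexive_coequalizers
    {C : Type u} [Category.{v} C] [HasReflexiveCoequalizers C] (T : Monad C)
    (hT : ∀ ⦃A B : C⦄ (f g : A ⟶ B), IsReflexivePair f g →
      PreservesColimit (parallelPair f g) (T : C ⥤ C))
    {X Y : T.Algebra} (f g : X ⟶ Y) (hfg : IsReflexivePair f g) :
    Nonempty (CreatesColimit (parallelPair f g) T.forget) := by
  obtain ⟨s, hs1, hs2⟩ := hfg.common_section'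
  have e1 : s.f ≫ f.f = 𝟙 Y.A := congrArg Monad.Algebra.Hom.f hs1
  have e2 : s.f ≫ g.f = 𝟙 Y.A := congrArg Monad.Algebra.Hom.f hs2
  have h1 : IsReflexivePair f.f g.f := IsReflexivePair.mk' s.f e1 e2
  have h2 : IsReflexivePair ((T : C ⥤ C).map f.f) ((T : C ⥤ C).map g.f) :=
    IsReflexivePair.mk' ((T : C ⥤ C).map s.f)
      (by rw [← Functor.map_comp, e1]; simp)
      (by rw [← Functor.map_comp, e2]; simp)
  haveI := hT f.f g.f h1
  haveI := hT _ _ h2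
  haveI : PreservesColimit
      (parallelPair ((parallelPair f g ⋙ T.forget).map WalkingParallelPairHom.left)
        ((parallelPair f g ⋙ T.forget).map WalkingParallelPairHom.right)) (T : C ⥤ C) :=
    hT f.f g.f h1
  haveI : PreservesColimit
      (parallelPair (((parallelPair f g ⋙ T.forget) ⋙ (T : C ⥤ C)).map
          WalkingParallelPairHom.left)
        (((parallelPair f g ⋙ T.forget) ⋙ (T : C ⥤ C)).map
          WalkingParallelPairHom.right)) (T : C ⥤ C) :=
    hT _ _ h2
  haveI i1 : PreservesColimit (parallelPair f g ⋙ T.forget) (T : C ⥤ C) :=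
    preservesColimit_of_iso_diagram _ (diagramIsoParallelPair _).symm
  haveI i2 : PreservesColimit ((parallelPair f g ⋙ T.forget) ⋙ (T : C ⥤ C)) (T : C ⥤ C) :=
    preservesColimit_of_iso_diagram _ (diagramIsoParallelPair _).symm
  exact ⟨Monad.forgetCreatesColimit _⟩
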